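/- Let p be a prime and let d and n be positive integers. Then the number of subgroups Λ of ℤ^d of index p^n (equivalently, with ℤ^d/Λ a finite abelian p-group of order p^n) equals p^{n(d-1)} (1/p)_{d+n-1} / ((1/p)_{d-1} (1/p)_n). -/

import Mathlib

open Finset

noncomputable section

/-- `(x)_i = (1-x)(1-x/p)⋯(1-x/p^{i-1})`. -/
def poch (p x : ℝ) (i : ℕ) : ℝ := ∏ k ∈ Finset.range i, (1 - x / p ^ k)

namespace SublatticeAux

open AddSubgroup

/-! ### Analytic part -/

lemma poch_succ (p x : ℝ) (i : ℕ) : poch p x (i + 1) = poch p x i * (1 - x / p ^ i) :=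
  Finset.prod_range_succ _ _

lemma poch_zero (p x : ℝ) : poch p x 0 = 1 := by simp [poch]

lemma poch_pos {p : ℝ} (hp : 1 < p) (i : ℕ) : 0 < poch p (1 / p) i := by
  have hp0 : (0:ℝ) < p := lt_trans one_pos hp
  refine Finset.prod_pos fun k _ => ?_
  have hk : (0:ℝ) < p ^ k := pow_pos hp0 k
  have h1 : 1 / p / p ^ k < 1 := by
    rw [div_lt_one hk]
    calc 1 / p < 1 := by rw [div_lt_one hp0]; exact hp
    _ ≤ p ^ k := one_le_pow₀ hp.le
  linarith

/-- The counting function: `cnt p d n` will be the number of subgroups of `ℤ^d`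
of index `p^n`. -/
def cnt (p : ℕ) : ℕ → ℕ → ℕ
  | 0, n => if n = 0 then 1 else 0
  | d + 1, n => ∑ m ∈ Finset.range (n + 1), p ^ m * cnt p d m

lemma cnt_zero (p : ℕ) : ∀ d, cnt p d 0 = 1 := by
  intro d
  induction d with
  | zero => rfl
  | succ d ih => simp [cnt, ih]

lemma cnt_cast {p : ℕ} (hp : 1 < p) (e : ℕ) : ∀ n : ℕ, (cnt p (e + 1) n : ℝ) =
    (p : ℝ) ^ (n * e) * poch (p : ℝ) (1 / (p : ℝ)) (e + n) /
      (poch (p : ℝ) (1 / (p : ℝ)) e * poch (p : ℝ) (1 / (p : ℝ)) n) := by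
  have hpR : (1:ℝ) < (p : ℝ) := by exact_mod_cast hp
  have hp0 : (p:ℝ) ≠ 0 := by positivity
  induction e with
  | zero =>
    intro n
    have hsum : cnt p 1 n = 1 := by
      rw [show cnt p 1 n = ∑ m ∈ Finset.range (n + 1), p ^ m * cnt p 0 m from rfl]
      rw [Finset.sum_eq_single_of_mem 0 (Finset.mem_range.2 (Nat.succ_pos n))]
      · simp [cnt]
      · intro m _ hm
        simp [cnt, hm]
    rw [hsum]
    have hN := (poch_pos hpR n).ne'
    rw [poch_zero]
    simp only [Nat.mul_zero, pow_zero, Nat.zero_add, one_mul, Nat.cast_one]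
    rw [div_self hN]
  | succ e ih =>
    intro n
    induction n with
    | zero =>
      have : cnt p (e + 1 + 1) 0 = 1 := cnt_zero p _
      rw [this, poch_zero]
      have hE := (poch_pos hpR (e + 1 + 0)).ne'
      simp at hE ⊢
      rw [div_self]
      simpa using hE
    | succ n ihn =>
      have hstep : cnt p (e + 1 + 1) (n + 1)
          = cnt p (e + 1 + 1) n + p ^ (n + 1) * cnt p (e + 1) (n + 1) := by
        rw [show cnt p (e + 1 + 1) (n+1)
            = ∑ m ∈ Finset.range (n + 1 + 1), p ^ m * cnt p (e + 1) m from rfl,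
          Finset.sum_range_succ]
        rfl
      rw [hstep]
      push_cast
      rw [ihn, ih (n + 1)]
      -- normalize poch indices
      have h1 : e + 1 + n = (e + n) + 1 := by omega
      have h2 : e + (n + 1) = (e + n) + 1 := by omega
      have h3 : e + 1 + (n + 1) = (e + n) + 1 + 1 := by omega
      rw [h1, h2, h3]
      set q : ℝ := (p : ℝ) with hq
      -- expand the `poch` recurrences
      rw [poch_succ q _ (e + n + 1), poch_succ q _ (e + n), poch_succ q _ n, poch_succ q _ e]
      -- normalize exponents into atoms q^(n*e), q^n, q^e, q
      rw [show n * (e + 1) = n * e + n by ring, show (n + 1) * e = n * e + e by ring,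
        show (n + 1) * (e + 1) = n * e + n + e + 1 by ring,
        show e + n + 1 = e + n + 1 from rfl]
      rw [pow_add, pow_add, pow_add, pow_add, pow_succ, pow_succ q (e + n), pow_add q e n]
      set E : ℝ := poch q (1 / q) e with hE
      set N : ℝ := poch q (1 / q) n with hN
      set A : ℝ := poch q (1 / q) (e + n) with hA
      have hEne : E ≠ 0 := (poch_pos hpR e).ne'
      have hNne : N ≠ 0 := (poch_pos hpR n).ne'
      have hAne : A ≠ 0 := (poch_pos hpR (e + n)).ne'
      have hue : (1 : ℝ) - (1 / q) / q ^ e ≠ 0 := by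
        have h := poch_pos hpR (e + 1)
        rw [poch_succ] at h
        have hEpos : (0:ℝ) < E := poch_pos hpR e
        have : (0:ℝ) < 1 - (1 / q) / q ^ e := by nlinarith
        exact this.ne'
      have hun : (1 : ℝ) - (1 / q) / q ^ n ≠ 0 := by
        have h := poch_pos hpR (n + 1)
        rw [poch_succ] at h
        have hNpos : (0:ℝ) < N := poch_pos hpR n
        have : (0:ℝ) < 1 - (1 / q) / q ^ n := by nlinarith
        exact this.ne'
      have hqe : q ^ e ≠ 0 := pow_ne_zero _ hp0
      have hqn : q ^ n ≠ 0 := pow_ne_zero _ hp0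
      have hqne : q ^ (n * e) ≠ 0 := pow_ne_zero _ hp0
      have hq0 : (0:ℝ) < q := lt_trans one_pos hpR
      have hqe1 : (1:ℝ) ≤ q ^ e := one_le_pow₀ hpR.le
      have hqn1 : (1:ℝ) ≤ q ^ n := one_le_pow₀ hpR.le
      have hde : q * q ^ e - 1 ≠ 0 := by nlinarith
      have hdn : q * q ^ n - 1 ≠ 0 := by nlinarith
      have hXY : (1:ℝ) ≤ q ^ e * q ^ n := by nlinarith
      have hden : q * (q ^ e * q ^ n) - 1 ≠ 0 := by nlinarith
      have hXYq : (1:ℝ) ≤ q ^ e * q ^ n * q := by nlinarith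
      have hden1 : q * (q ^ e * q ^ n * q) - 1 ≠ 0 := by nlinarith
      have r1 : (1:ℝ) - 1/q/(q^e*q^n) = (q*(q^e*q^n) - 1)/(q*(q^e*q^n)) := by
        rw [div_div, one_sub_div (mul_ne_zero hp0 (mul_ne_zero hqe hqn))]
      have r2 : (1:ℝ) - 1/q/q^e = (q*q^e - 1)/(q*q^e) := by
        rw [div_div, one_sub_div (mul_ne_zero hp0 hqe)]
      have r3 : (1:ℝ) - 1/q/q^n = (q*q^n - 1)/(q*q^n) := by
        rw [div_div, one_sub_div (mul_ne_zero hp0 hqn)]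
      have r4 : (1:ℝ) - 1/q/(q^e*q^n*q) = (q*(q^e*q^n*q) - 1)/(q*(q^e*q^n*q)) := by
        rw [div_div, one_sub_div (mul_ne_zero hp0 (mul_ne_zero (mul_ne_zero hqe hqn) hp0))]
      rw [r1, r2, r3, r4]
      field_simp [hde, hdn, hden, hden1, hEne, hNne, hqe, hqn, hqne]
      have hdn' : q ^ n * q - 1 ≠ 0 := by rw [mul_comm]; exact hdn
      field_simp
      ring

/-! ### Combinatorial part -/

section Product

variable {H : Type} [AddCommGroup H]

lemma range_inr_eq_ker_fst :
    (AddMonoidHom.inr ℤ H).range = (AddMonoidHom.fst ℤ H).ker := by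
  ext x
  constructor
  · rintro ⟨y, rfl⟩
    exact AddMonoidHom.mem_ker.2 rfl
  · intro hx
    have h1 : x.1 = 0 := hx
    refine ⟨x.2, ?_⟩
    rw [Prod.ext_iff]
    exact ⟨h1.symm, rfl⟩

lemma index_eq_mul (Λ : AddSubgroup (ℤ × H)) :
    Λ.index = (Λ.map (AddMonoidHom.fst ℤ H)).index
      * (Λ.comap (AddMonoidHom.inr ℤ H)).index := by
  have hsurj : Function.Surjective (AddMonoidHom.fst ℤ H) := fun x => ⟨(x, 0), rfl⟩
  have h1 : Λ.relIndex (Λ ⊔ (AddMonoidHom.fst ℤ H).ker)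
      * (Λ ⊔ (AddMonoidHom.fst ℤ H).ker).index = Λ.index :=
    AddSubgroup.relIndex_mul_index le_sup_left
  have h2 : (Λ ⊔ (AddMonoidHom.fst ℤ H).ker).index
      = (Λ.map (AddMonoidHom.fst ℤ H)).index := by
    rw [← AddSubgroup.comap_map_eq]
    exact AddSubgroup.index_comap_of_surjective _ hsurj
  have h3 : Λ.relIndex (Λ ⊔ (AddMonoidHom.fst ℤ H).ker)
      = (Λ.comap (AddMonoidHom.inr ℤ H)).index := by
    rw [AddSubgroup.relIndex_sup_left, AddSubgroup.index_comap, range_inr_eq_ker_fst]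
  rw [← h1, h2, h3, mul_comm]

variable (p : ℕ)

/-- The subgroup of `ℤ × H` generated by `(p^k, h₀)` and `{0} × Λ'`. -/
def build (k : ℕ) (h₀ : H) (Λ' : AddSubgroup H) : AddSubgroup (ℤ × H) :=
  AddSubgroup.zmultiples (((p:ℤ)^k, h₀) : ℤ × H) ⊔ Λ'.map (AddMonoidHom.inr ℤ H)

lemma mem_build {k : ℕ} {h₀ : H} {Λ' : AddSubgroup H} {x : ℤ × H} :
    x ∈ build p k h₀ Λ' ↔ ∃ m : ℤ, x.1 = m * (p:ℤ)^k ∧ x.2 - m • h₀ ∈ Λ' := by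
  constructor
  · intro hx
    obtain ⟨y, hy, z, hz, hyz⟩ := AddSubgroup.mem_sup.1 hx
    obtain ⟨m, rfl⟩ := AddSubgroup.mem_zmultiples_iff.1 hy
    obtain ⟨w, hw, rfl⟩ := AddSubgroup.mem_map.1 hz
    refine ⟨m, ?_, ?_⟩
    · rw [← hyz]; simp [zsmul_eq_mul]
    · rw [← hyz]; simpa using hw
  · rintro ⟨m, hx1, hx2⟩
    apply AddSubgroup.mem_sup.2
    refine ⟨m • (((p:ℤ)^k, h₀) : ℤ × H), AddSubgroup.mem_zmultiples_iff.2 ⟨m, rfl⟩,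
      (0, x.2 - m • h₀), AddSubgroup.mem_map.2 ⟨x.2 - m • h₀, hx2, rfl⟩, ?_⟩
    ext
    · simp [zsmul_eq_mul, hx1]
    · simp

lemma map_fst_build {k : ℕ} {h₀ : H} {Λ' : AddSubgroup H} :
    (build p k h₀ Λ').map (AddMonoidHom.fst ℤ H) = AddSubgroup.zmultiples ((p:ℤ)^k) := by
  ext a
  simp only [AddSubgroup.mem_map]
  constructor
  · rintro ⟨x, hx, rfl⟩
    obtain ⟨m, h1, -⟩ := (mem_build p).1 hx
    exact Int.mem_zmultiples_iff.2 ⟨m, by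
      rw [show (AddMonoidHom.fst ℤ H) x = x.1 from rfl, h1]; ring⟩
  · intro ha
    obtain ⟨m, rfl⟩ := AddSubgroup.mem_zmultiples_iff.1 ha
    exact ⟨(m • (p:ℤ)^k, m • h₀), (mem_build p).2 ⟨m, by simp [zsmul_eq_mul],
      by simpa using Λ'.zero_mem⟩, rfl⟩

lemma comap_inr_build (hp : p ≠ 0) {k : ℕ} {h₀ : H} {Λ' : AddSubgroup H} :
    (build p k h₀ Λ').comap (AddMonoidHom.inr ℤ H) = Λ' := by
  have hpk : ((p:ℤ))^k ≠ 0 := pow_ne_zero _ (by exact_mod_cast hp)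
  ext h
  simp only [AddSubgroup.mem_comap]
  rw [show (AddMonoidHom.inr ℤ H) h = ((0 : ℤ), h) from rfl, mem_build]
  constructor
  · rintro ⟨m, h1, h2⟩
    have hm : m = 0 := by
      rcases mul_eq_zero.1 h1.symm with h | h
      · exact h
      · exact absurd h hpk
    simpa [hm] using h2
  · intro hh
    exact ⟨0, by simp, by simpa using hh⟩

lemma index_build (hp : p ≠ 0) {k : ℕ} {h₀ : H} {Λ' : AddSubgroup H} :
    (build p k h₀ Λ').index = p ^ k * Λ'.index := by
  rw [index_eq_mul, map_fst_build, comap_inr_build p hp, Int.index_zmultiples]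
  congr 1

lemma build_eq_self {Λ : AddSubgroup (ℤ × H)} {k : ℕ} {h₀ : H}
    (hmem : (((p:ℤ)^k, h₀) : ℤ × H) ∈ Λ)
    (hmap : Λ.map (AddMonoidHom.fst ℤ H) = AddSubgroup.zmultiples ((p:ℤ)^k)) :
    build p k h₀ (Λ.comap (AddMonoidHom.inr ℤ H)) = Λ := by
  apply le_antisymm
  · apply sup_le
    · intro x hx
      obtain ⟨m, rfl⟩ := AddSubgroup.mem_zmultiples_iff.1 hx
      exact Λ.zsmul_mem hmem m
    · exact AddSubgroup.map_comap_le _ _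
  · intro x hx
    have hx1 : x.1 ∈ Λ.map (AddMonoidHom.fst ℤ H) := ⟨x, hx, rfl⟩
    rw [hmap] at hx1
    obtain ⟨m, hm⟩ := AddSubgroup.mem_zmultiples_iff.1 hx1
    have hsub : x - m • (((p:ℤ)^k, h₀) : ℤ × H) ∈ Λ := Λ.sub_mem hx (Λ.zsmul_mem hmem m)
    have hrepr : x - m • (((p:ℤ)^k, h₀) : ℤ × H) = (x.1 - m • (p:ℤ)^k, x.2 - m • h₀) := rfl
    refine (mem_build p).2 ⟨m, by rw [← hm]; simp [zsmul_eq_mul], ?_⟩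
    rw [AddSubgroup.mem_comap]
    have h2 : (AddMonoidHom.inr ℤ H) (x.2 - m • h₀) = x - m • (((p:ℤ)^k, h₀) : ℤ × H) := by
      rw [hrepr, show (AddMonoidHom.inr ℤ H) (x.2 - m • h₀) = ((0:ℤ), x.2 - m • h₀) from rfl]
      have h0 : x.1 - m • (p:ℤ)^k = 0 := by rw [← hm]; exact sub_self _
      rw [h0]
    rw [h2]
    exact hsub

lemma zmultiples_natAbs (g : ℤ) :
    AddSubgroup.zmultiples ((g.natAbs : ℤ)) = AddSubgroup.zmultiples g := by
  ext x
  simp [Int.mem_zmultiples_iff, Int.natAbs_dvd]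

lemma exists_k (hp : p.Prime) {n : ℕ} (Λ : AddSubgroup (ℤ × H)) (hΛ : Λ.index = p ^ n) :
    ∃ k ≤ n, Λ.map (AddMonoidHom.fst ℤ H) = AddSubgroup.zmultiples ((p:ℤ)^k) := by
  obtain ⟨g, hg⟩ := Int.subgroup_cyclic (Λ.map (AddMonoidHom.fst ℤ H))
  have hg' : Λ.map (AddMonoidHom.fst ℤ H) = AddSubgroup.zmultiples g := by
    rw [hg, AddSubgroup.zmultiples_eq_closure]
  have hdvd : (Λ.map (AddMonoidHom.fst ℤ H)).index ∣ p ^ n := by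
    rw [← hΛ, index_eq_mul]
    exact dvd_mul_right _ _
  rw [hg', Int.index_zmultiples] at hdvd
  obtain ⟨k, hk, hpk⟩ := (Nat.dvd_prime_pow hp).1 hdvd
  refine ⟨k, hk, ?_⟩
  rw [hg', ← zmultiples_natAbs g, hpk]
  norm_num

lemma build_inj (hp : 1 < p) {k k' : ℕ} {h₀ h₁ : H} {Λ' Λ'' : AddSubgroup H}
    (h : build p k h₀ Λ' = build p k' h₁ Λ'') : k = k' ∧ Λ' = Λ'' ∧ h₀ - h₁ ∈ Λ'' := by
  have hp0 : p ≠ 0 := by omega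
  have hmap := congrArg (fun Λ => AddSubgroup.map (AddMonoidHom.fst ℤ H) Λ) h
  simp only [map_fst_build] at hmap
  have hidx := congrArg AddSubgroup.index hmap
  simp only [Int.index_zmultiples, Int.natAbs_pow, Int.natAbs_natCast] at hidx
  have hkk : k = k' := Nat.pow_right_injective hp hidx
  subst hkk
  have hcomap := congrArg (fun Λ => AddSubgroup.comap (AddMonoidHom.inr ℤ H) Λ) h
  simp only [comap_inr_build p hp0] at hcomap
  refine ⟨rfl, hcomap, ?_⟩
  have hmem : (((p:ℤ)^k, h₀) : ℤ × H) ∈ build p k h₁ Λ'' := by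
    rw [← h]
    exact (mem_build p).2 ⟨1, by simp, by simpa using Λ'.zero_mem⟩
  obtain ⟨m, h1, h2⟩ := (mem_build p).1 hmem
  have hpk : ((p:ℤ))^k ≠ 0 := pow_ne_zero _ (by exact_mod_cast hp0)
  have hm : m = 1 := by
    have : (1 : ℤ) * (p:ℤ)^k = m * (p:ℤ)^k := by rw [one_mul]; exact h1
    exact (mul_right_cancel₀ hpk this).symm
  subst hm
  simpa using h2

lemma count_step (hp : p.Prime) (n : ℕ)
    (hfin : ∀ m : ℕ, Finite {Λ' : AddSubgroup H // Λ'.index = p ^ m}) :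
    Finite {Λ : AddSubgroup (ℤ × H) // Λ.index = p ^ n} ∧
    Nat.card {Λ : AddSubgroup (ℤ × H) // Λ.index = p ^ n}
      = ∑ m ∈ Finset.range (n + 1), p ^ m * Nat.card {Λ' : AddSubgroup H // Λ'.index = p ^ m} := by
  classical
  have hp0 : p ≠ 0 := hp.ne_zero
  -- the parametrizing type
  let T : Fin (n+1) → Type _ := fun m => {Λ' : AddSubgroup H // Λ'.index = p ^ (m : ℕ)}
  let S : Type _ := Σ m : Fin (n+1), Σ Λ' : T m, H ⧸ Λ'.1
  haveI hTfin : ∀ m : Fin (n+1), Finite (T m) := fun m => hfin m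
  haveI hQfin : ∀ (m : Fin (n+1)) (Λ' : T m), Finite (H ⧸ Λ'.1) := by
    intro m Λ'
    haveI : Λ'.1.FiniteIndex := ⟨by rw [Λ'.2]; exact pow_ne_zero _ hp0⟩
    infer_instance
  -- the bijection
  have hb : ∀ x : S, (build p (n - (x.1 : ℕ)) (Quotient.out x.2.2) x.2.1.1).index = p ^ n := by
    rintro ⟨m, Λ', c⟩
    rw [index_build p hp0, Λ'.2, ← pow_add, Nat.sub_add_cancel (Nat.lt_succ_iff.1 m.isLt)]
  let F : S → {Λ : AddSubgroup (ℤ × H) // Λ.index = p ^ n} :=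
    fun x => ⟨build p (n - (x.1 : ℕ)) (Quotient.out x.2.2) x.2.1.1, hb x⟩
  have hFinj : Function.Injective F := by
    rintro ⟨m₁, ⟨Λ₁, hΛ₁⟩, c₁⟩ ⟨m₂, ⟨Λ₂, hΛ₂⟩, c₂⟩ hab
    have h := build_inj p hp.one_lt (Subtype.ext_iff.1 hab)
    have hm : m₁ = m₂ := by
      have h0 : n - (m₁ : ℕ) = n - (m₂ : ℕ) := h.1
      have h1 := Nat.lt_succ_iff.1 m₁.isLt
      have h2 := Nat.lt_succ_iff.1 m₂.isLt
      exact Fin.ext (by omega)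
    subst hm
    have hΛ : Λ₁ = Λ₂ := h.2.1
    subst hΛ
    have hc : c₁ = c₂ := by
      rw [← QuotientAddGroup.out_eq' c₁, ← QuotientAddGroup.out_eq' c₂, QuotientAddGroup.eq]
      have := h.2.2
      simpa [neg_add_eq_sub] using Λ₁.neg_mem this
    subst hc
    rfl
  have hFsurj : Function.Surjective F := by
    rintro ⟨Λ, hΛ⟩
    obtain ⟨k, hk, hmap⟩ := exists_k p hp Λ hΛ
    set Λ' : AddSubgroup H := Λ.comap (AddMonoidHom.inr ℤ H) with hΛ'def
    have hidx : p ^ n = p ^ k * Λ'.index := by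
      rw [← hΛ, index_eq_mul, hmap, Int.index_zmultiples, Int.natAbs_pow]
      simp
      exact Or.inl rfl
    have hΛ'idx : Λ'.index = p ^ (n - k) := by
      have h1 : p ^ k * Λ'.index = p ^ k * p ^ (n - k) := by
        rw [← hidx, ← pow_add, Nat.add_sub_cancel' hk]
      exact Nat.eq_of_mul_eq_mul_left (Nat.pow_pos hp.pos) h1
    have hpk_mem : ((p:ℤ)^k) ∈ Λ.map (AddMonoidHom.fst ℤ H) := by
      rw [hmap]; exact AddSubgroup.mem_zmultiples _
    obtain ⟨v, hv, hv1⟩ := hpk_mem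
    have hnk : n - k < n + 1 := by omega
    refine ⟨⟨⟨n - k, hnk⟩, ⟨Λ', hΛ'idx⟩, QuotientAddGroup.mk v.2⟩, ?_⟩
    apply Subtype.ext
    show build p (n - (n - k)) (Quotient.out (QuotientAddGroup.mk v.2 : H ⧸ Λ')) Λ' = Λ
    rw [Nat.sub_sub_self hk]
    set w : H := Quotient.out (QuotientAddGroup.mk v.2 : H ⧸ Λ') with hw
    have hd : w - v.2 ∈ Λ' := by
      have : (QuotientAddGroup.mk w : H ⧸ Λ') = QuotientAddGroup.mk v.2 := by
        rw [hw]; exact QuotientAddGroup.out_eq' _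
      have h2 := (QuotientAddGroup.eq ).1 this
      simpa [neg_add_eq_sub] using Λ'.neg_mem h2
    have hvrepr : v = (((p:ℤ)^k, v.2) : ℤ × H) := by
      rw [Prod.ext_iff]
      exact ⟨hv1, rfl⟩
    have hmem : (((p:ℤ)^k, w) : ℤ × H) ∈ Λ := by
      have h1 : (((p:ℤ)^k, w) : ℤ × H) = v + ((0 : ℤ), w - v.2) := by
        rw [hvrepr, Prod.ext_iff]
        constructor
        · simp
        · simp
      rw [h1]
      exact Λ.add_mem hv hd
    exact build_eq_self p hmem hmap
  let E : S ≃ {Λ : AddSubgroup (ℤ × H) // Λ.index = p ^ n} :=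
    Equiv.ofBijective F ⟨hFinj, hFsurj⟩
  constructor
  · exact Finite.of_equiv S E
  · rw [← Nat.card_congr E]
    letI iT : ∀ m : Fin (n+1), Fintype (T m) := fun m => Fintype.ofFinite _
    letI iQ : ∀ (m : Fin (n+1)) (Λ' : T m), Fintype (H ⧸ Λ'.1) := fun m Λ' => Fintype.ofFinite _
    rw [Nat.card_eq_fintype_card]
    rw [Fintype.card_sigma]
    rw [← Fin.sum_univ_eq_sum_range
      (fun m => p ^ m * Nat.card {Λ' : AddSubgroup H // Λ'.index = p ^ m}) (n+1)]
    apply Finset.sum_congr rfl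
    intro m _
    rw [Fintype.card_sigma]
    have hcard : ∀ Λ' : T m, Fintype.card (H ⧸ Λ'.1) = p ^ (m : ℕ) := by
      intro Λ'
      rw [← Nat.card_eq_fintype_card, ← AddSubgroup.index_eq_card, Λ'.2]
    calc (∑ Λ' : T m, Fintype.card (H ⧸ Λ'.1))
        = ∑ _Λ' : T m, p ^ (m : ℕ) := by
          apply Finset.sum_congr rfl; intro Λ' _; exact hcard Λ'
      _ = Fintype.card (T m) * p ^ (m : ℕ) := by
          rw [Finset.sum_const, Finset.card_univ, smul_eq_mul]
      _ = p ^ (m : ℕ) * Nat.card (T m) := by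
          rw [Nat.card_eq_fintype_card, mul_comm]

end Product

/-- Transfer of subgroups-with-given-index along an additive equivalence. -/
def indexSubtypeEquiv {G G' : Type} [AddCommGroup G] [AddCommGroup G'] (e : G ≃+ G')
    (N : ℕ) : {Λ : AddSubgroup G // Λ.index = N} ≃ {Λ' : AddSubgroup G' // Λ'.index = N} where
  toFun Λ := ⟨Λ.1.comap e.symm.toAddMonoidHom, by
    rw [AddSubgroup.index_comap_of_surjective _ e.symm.surjective, Λ.2]⟩
  invFun Λ' := ⟨Λ'.1.comap e.toAddMonoidHom, by
    rw [AddSubgroup.index_comap_of_surjective _ e.surjective, Λ'.2]⟩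
  left_inv Λ := Subtype.ext (by
    ext x
    simp [AddSubgroup.mem_comap])
  right_inv Λ' := Subtype.ext (by
    ext x
    simp [AddSubgroup.mem_comap])

/-- `ℤ^{d+1} ≃+ ℤ × ℤ^d`. -/
def piSuccAddEquiv (d : ℕ) : (Fin (d+1) → ℤ) ≃+ ℤ × (Fin d → ℤ) :=
  { (Fin.consEquiv fun _ : Fin (d+1) => ℤ).symm with map_add' := fun _ _ => rfl }

lemma count_lattices (p : ℕ) (hp : p.Prime) :
    ∀ d n : ℕ, Finite {Λ : AddSubgroup (Fin d → ℤ) // Λ.index = p ^ n} ∧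
      Nat.card {Λ : AddSubgroup (Fin d → ℤ) // Λ.index = p ^ n} = cnt p d n := by
  intro d
  induction d with
  | zero =>
    intro n
    have hall : ∀ Λ : AddSubgroup (Fin 0 → ℤ), Λ = ⊤ := by
      intro Λ
      ext x
      simp only [AddSubgroup.mem_top, iff_true]
      have hx : x = 0 := Subsingleton.elim x 0
      rw [hx]
      exact Λ.zero_mem
    haveI : Finite (AddSubgroup (Fin 0 → ℤ)) :=
      @Finite.of_subsingleton _ ⟨fun a b => (hall a).trans (hall b).symm⟩
    refine ⟨inferInstance, ?_⟩
    rcases Nat.eq_zero_or_pos n with rfl | hn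
    · haveI : Unique {Λ : AddSubgroup (Fin 0 → ℤ) // Λ.index = p ^ 0} :=
        { default := ⟨⊤, by simp [AddSubgroup.index_top]⟩,
          uniq := fun a => Subtype.ext ((hall a.1).trans (hall _).symm) }
      rw [Nat.card_unique]
      simp [cnt]
    · haveI : IsEmpty {Λ : AddSubgroup (Fin 0 → ℤ) // Λ.index = p ^ n} := ⟨by
        rintro ⟨Λ, hΛ⟩
        rw [hall Λ, AddSubgroup.index_top] at hΛ
        have h1 : 1 < p ^ n := Nat.one_lt_pow (by omega) hp.one_lt
        omega⟩
      rw [Nat.card_of_isEmpty]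
      have : n ≠ 0 := by omega
      simp [cnt, this]
  | succ d ih =>
    intro n
    have hstep := count_step p hp n (fun m => (ih m).1)
    let E := indexSubtypeEquiv (piSuccAddEquiv d) (p ^ n)
    haveI := hstep.1
    refine ⟨Finite.of_equiv _ E.symm, ?_⟩
    rw [Nat.card_congr E, hstep.2,
      show cnt p (d+1) n = ∑ m ∈ Finset.range (n+1), p ^ m * cnt p d m from rfl]
    exact Finset.sum_congr rfl fun m _ => by rw [(ih m).2]

end SublatticeAux

theorem card_sublattices_of_index_p_pow (p : ℕ) (hp : p.Prime) (d n : ℕ)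
    (hd : 0 < d) (hn : 0 < n) :
    (Nat.card {Λ : AddSubgroup (Fin d → ℤ) // Λ.index = p ^ n} : ℝ) =
      (p : ℝ) ^ (n * (d - 1)) * poch (p : ℝ) (1 / (p : ℝ)) (d + n - 1) /
        (poch (p : ℝ) (1 / (p : ℝ)) (d - 1) * poch (p : ℝ) (1 / (p : ℝ)) n) := by
  obtain ⟨e, rfl⟩ : ∃ e, d = e + 1 := ⟨d - 1, by omega⟩
  rw [(SublatticeAux.count_lattices p hp (e+1) n).2, SublatticeAux.cnt_cast hp.one_lt e n,
    show e + 1 - 1 = e from rfl, show e + 1 + n - 1 = e + n by omega]
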